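/- Let ρ ∈ ℂ with ρ ∉ 2πiℤ. Then the limit as N → ∞ of Σ_{q=−N}^{N} (1 − |q|/N)·(−1)^q/(ρ + 2πiq) exists and equals 1/(2·sh(ρ/2)). -/

import Mathlib

open Complex Filter
/-- The complex hyperbolic sine `sh z = (e^z - e^{-z})/2`. -/
noncomputable def sh (z : ℂ) : ℂ := (Complex.exp z - Complex.exp (-z)) / 2
namespace Stmt16



noncomputable def d (ρ : ℂ) (n : ℤ) : ℂ := ρ + 2 * Real.pi * Complex.I * n

lemma key (c ρ : ℂ) (x : ℝ) : Complex.exp (c*x) * Complex.cosh (ρ*(x-1/2))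
    = Complex.exp (-(ρ/2))/2 * Complex.exp ((ρ+c)*x) + Complex.exp (ρ/2)/2 * Complex.exp ((-ρ+c)*x) := by
  rw [Complex.cosh, mul_div_assoc', mul_add, ← Complex.exp_add, ← Complex.exp_add,
    div_mul_eq_mul_div, div_mul_eq_mul_div, ← Complex.exp_add, ← Complex.exp_add, ← add_div]
  congr 3 <;> ring

lemma alg (A B E F : ℂ) (hA : A ≠ 0) (hB : B ≠ 0) (hEF : E * F = 1) :
    F/2 * ((E*E - 1)/B) + E/2 * ((F*F - 1)/(-A)) = (E - F)/2 * ((A + B)/(A*B)) := by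
  field_simp
  linear_combination (E*A - F*B) * hEF

lemma integral_step (ρ : ℂ) (n : ℤ) (h1 : ρ + 2*Real.pi*Complex.I*n ≠ 0) (h2 : ρ - 2*Real.pi*Complex.I*n ≠ 0) :
    (∫ x in (0:ℝ)..1, Complex.exp ((-2*Real.pi*Complex.I*n)*x) * Complex.cosh (ρ*(x-1/2)))
    = sh (ρ/2) * (2*ρ / (d ρ n * d ρ (-n))) := by
  have h1' : ρ + -2*Real.pi*Complex.I*n ≠ 0 := fun h => h2 (by linear_combination h)
  have h2' : -ρ + -2*Real.pi*Complex.I*n ≠ 0 := by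
    intro h; apply h1; linear_combination -h
  simp only [key]
  rw [intervalIntegral.integral_add, intervalIntegral.integral_const_mul,
    intervalIntegral.integral_const_mul, integral_exp_mul_complex h1', integral_exp_mul_complex h2']
  · have e1 : Complex.exp ((ρ + -2*Real.pi*Complex.I*n) * (1:ℝ)) = Complex.exp ρ := by
      rw [Complex.ofReal_one, mul_one, Complex.exp_add]
      rw [show Complex.exp (-2*Real.pi*Complex.I*n) = 1 from
        Complex.exp_eq_one_iff.2 ⟨-n, by push_cast; ring⟩, mul_one]
    have e2 : Complex.exp ((-ρ + -2*Real.pi*Complex.I*n) * (1:ℝ)) = Complex.exp (-ρ) := by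
      rw [Complex.ofReal_one, mul_one, Complex.exp_add]
      rw [show Complex.exp (-2*Real.pi*Complex.I*n) = 1 from
        Complex.exp_eq_one_iff.2 ⟨-n, by push_cast; ring⟩, mul_one]
    rw [Complex.ofReal_zero, mul_zero, mul_zero, Complex.exp_zero, e1, e2]
    have eρ : Complex.exp ρ = Complex.exp (ρ/2) * Complex.exp (ρ/2) := by
      rw [← Complex.exp_add]; ring_nf
    have eρ' : Complex.exp (-ρ) = Complex.exp (-(ρ/2)) * Complex.exp (-(ρ/2)) := by
      rw [← Complex.exp_add]; ring_nf
    have hEF : Complex.exp (ρ/2) * Complex.exp (-(ρ/2)) = 1 := by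
      rw [← Complex.exp_add]; simp
    have hA : d ρ n ≠ 0 := by simpa [d] using h1
    have hB : d ρ (-n) ≠ 0 := by
      intro h; apply h2; rw [d] at h; push_cast at h; linear_combination h
    rw [show ρ + -2*(Real.pi:ℂ)*Complex.I*(n:ℂ) = d ρ (-n) by rw [d]; push_cast; ring,
      show -ρ + -2*(Real.pi:ℂ)*Complex.I*(n:ℂ) = -(d ρ n) by rw [d]; push_cast; ring,
      show (2:ℂ)*ρ = d ρ n + d ρ (-n) by rw [d, d]; push_cast; ring,
      sh, eρ, eρ']
    exact alg _ _ _ _ hA hB hEF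
  · exact (continuous_const.mul (Complex.continuous_exp.comp
      (continuous_const.mul Complex.continuous_ofReal))).intervalIntegrable _ _
  · exact (continuous_const.mul (Complex.continuous_exp.comp
      (continuous_const.mul Complex.continuous_ofReal))).intervalIntegrable _ _


lemma norm_d_ge (ρ : ℂ) (n : ℤ) : 2*Real.pi*|(n:ℝ)| - ‖ρ‖ ≤ ‖d ρ n‖ := by
  have := norm_sub_norm_le (2*Real.pi*Complex.I*(n:ℂ)) (-ρ)
  rw [sub_neg_eq_add, norm_neg] at this
  have e : ‖2*(Real.pi:ℂ)*Complex.I*(n:ℂ)‖ = 2*Real.pi*|(n:ℝ)| := by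
    simp [norm_mul, Complex.norm_I, Complex.norm_real, Real.norm_eq_abs, abs_of_pos Real.pi_pos]
  rw [e] at this
  calc 2*Real.pi*|(n:ℝ)| - ‖ρ‖ ≤ ‖2*(Real.pi:ℂ)*Complex.I*(n:ℂ) + ρ‖ := this
  _ = ‖d ρ n‖ := by rw [d, add_comm]

lemma denom_lower (ρ : ℂ) : ∀ᶠ n : ℤ in Filter.cofinite,
    Real.pi * |(n:ℝ)| ≤ ‖d ρ n‖ ∧ Real.pi * |(n:ℝ)| ≤ ‖d ρ (-n)‖ ∧ 1 ≤ |(n:ℝ)| := by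
  have hπ := Real.pi_pos
  obtain ⟨m, hm⟩ := exists_nat_ge (‖ρ‖/Real.pi + 1)
  have key : ∀ n : ℤ, ‖ρ‖/Real.pi ≤ |(n:ℝ)| → Real.pi * |(n:ℝ)| ≤ ‖d ρ n‖ := by
    intro n hn
    have h1 : ‖ρ‖ ≤ Real.pi * |(n:ℝ)| := by rwa [div_le_iff₀ hπ, mul_comm] at hn
    have := norm_d_ge ρ n
    nlinarith [abs_nonneg ((n:ℝ))]
  rw [Filter.eventually_cofinite]
  apply Set.Finite.subset (Set.finite_Icc (-(m:ℤ)) (m:ℤ))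
  intro n hn
  simp only [Set.mem_setOf_eq, not_and_or] at hn
  by_contra hmem
  simp only [Set.mem_Icc, not_and_or, not_le] at hmem
  have h0 : (0:ℝ) ≤ ‖ρ‖/Real.pi := by positivity
  have habsZ : (m:ℤ) < |n| := by
    rcases hmem with h | h
    · exact lt_abs.mpr (Or.inr (by linarith))
    · exact lt_abs.mpr (Or.inl h)
  have habs : (m:ℝ) ≤ |(n:ℝ)| := by
    rw [← Int.cast_abs]; exact_mod_cast habsZ.le
  have hge : ‖ρ‖/Real.pi ≤ |(n:ℝ)| := by linarith
  have h1 : (1:ℝ) ≤ |(n:ℝ)| := by linarith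
  rcases hn with h | h | h
  · exact h (key n hge)
  · refine h ?_
    have := key (-n) (by rwa [Int.cast_neg, abs_neg])
    rwa [Int.cast_neg, abs_neg] at this
  · exact h h1
noncomputable def g (ρ : ℂ) (x : ℝ) : ℂ := Complex.cosh (ρ * (x - 1/2))

instance : Fact ((0:ℝ) < 1) := ⟨one_pos⟩

lemma g_cont (ρ : ℂ) : Continuous (g ρ) :=
  Complex.continuous_cosh.comp (continuous_const.mul (Complex.continuous_ofReal.sub continuous_const))

noncomputable def f (ρ : ℂ) : C(AddCircle (1:ℝ), ℂ) :=
  ⟨AddCircle.liftIco 1 0 (g ρ), AddCircle.liftIco_zero_continuous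
    (by simp only [g]; rw [show ρ * ((0:ℝ) - 1/2) = -(ρ * ((1:ℝ) - 1/2)) by push_cast; ring,
      Complex.cosh_neg])
    ((g_cont ρ).continuousOn)⟩

lemma coeff_eq (ρ : ℂ) (hρ : ∀ q : ℤ, ρ ≠ 2*Real.pi*Complex.I*q) (n : ℤ) :
    fourierCoeff (⇑(f ρ)) n = sh (ρ/2) * (2*ρ / (d ρ n * d ρ (-n))) := by
  have h1 : ρ + 2*Real.pi*Complex.I*n ≠ 0 := by
    intro h; exact hρ (-n) (by push_cast; linear_combination h)
  have h2 : ρ - 2*Real.pi*Complex.I*n ≠ 0 := by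
    intro h; exact hρ n (by linear_combination h)
  rw [show ⇑(f ρ) = AddCircle.liftIco 1 0 (g ρ) from rfl, fourierCoeff_liftIco_eq,
    fourierCoeffOn_eq_integral]
  rw [← integral_step ρ n h1 h2]
  simp only [zero_add, sub_zero, one_smul, smul_eq_mul]
  norm_num
  refine intervalIntegral.integral_congr fun x hx => ?_
  rw [← Complex.exp_conj, g]
  congr 2
  simp only [map_mul, Complex.conj_I, Complex.conj_ofReal, map_intCast, map_ofNat]
  ring

lemma hsh (ρ : ℂ) (hρ : ∀ q : ℤ, ρ ≠ 2*Real.pi*Complex.I*q) : sh (ρ/2) ≠ 0 := by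
  intro h
  rw [sh, div_eq_zero_iff] at h
  have h' : Complex.exp (ρ/2) = Complex.exp (-(ρ/2)) := by
    rcases h with h | h
    · exact sub_eq_zero.mp h
    · norm_num at h
  obtain ⟨n, hn⟩ := Complex.exp_eq_exp_iff_exists_int.mp h'
  exact hρ n (by linear_combination hn)

lemma summ (ρ : ℂ) (hρ : ∀ q : ℤ, ρ ≠ 2*Real.pi*Complex.I*q) :
    Summable (fourierCoeff ⇑(f ρ)) := by
  apply Summable.of_norm_bounded_eventually
    (g := fun n : ℤ => (‖sh (ρ/2)‖ * (2*‖ρ‖) / (Real.pi*Real.pi)) * (1/(n:ℝ)^2))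
    ((Real.summable_one_div_int_pow.mpr one_lt_two).mul_left _)
  filter_upwards [denom_lower ρ] with n hn
  obtain ⟨hd1, hd2, hn1⟩ := hn
  rw [coeff_eq ρ hρ n]
  have hn0 : (0:ℝ) < |(n:ℝ)| := by linarith
  have hd1' : (0:ℝ) < ‖d ρ n‖ := lt_of_lt_of_le (by positivity) hd1
  have hd2' : (0:ℝ) < ‖d ρ (-n)‖ := lt_of_lt_of_le (by positivity) hd2
  have e1 : ‖sh (ρ/2) * (2*ρ / (d ρ n * d ρ (-n)))‖
      = ‖sh (ρ/2)‖ * (2*‖ρ‖ / (‖d ρ n‖ * ‖d ρ (-n)‖)) := by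
    simp [norm_mul, norm_div]
  rw [e1]
  have hn0' : (n:ℝ) ≠ 0 := by intro h; rw [h] at hn0; simp at hn0
  have hnn0 : (n:ℝ)^2 ≠ 0 := pow_ne_zero 2 hn0'
  have hpp : Real.pi * Real.pi ≠ 0 := by positivity
  have h3 : (Real.pi*|(n:ℝ)|) * (Real.pi*|(n:ℝ)|) = (Real.pi*Real.pi)*((n:ℝ)^2) := by
    rw [pow_two, mul_mul_mul_comm, abs_mul_abs_self]
  have e2 : ‖sh (ρ/2)‖ * (2*‖ρ‖ / ((Real.pi*|(n:ℝ)|) * (Real.pi*|(n:ℝ)|)))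
      = (‖sh (ρ/2)‖ * (2*‖ρ‖) / (Real.pi*Real.pi)) * (1/(n:ℝ)^2) := by
    rw [h3]; field_simp
  rw [← e2]
  gcongr <;> positivity

lemma hasSum_v (ρ : ℂ) (hρ : ∀ q : ℤ, ρ ≠ 2*Real.pi*Complex.I*q) :
    HasSum (fun n : ℤ => (-1:ℂ)^n * ρ / (d ρ n * d ρ (-n))) (1/(2*sh (ρ/2))) := by
  have hs := has_pointwise_sum_fourier_series_of_summable (summ ρ hρ) ((1/2 : ℝ) : AddCircle (1:ℝ))
  have hf : (f ρ) ((1/2 : ℝ) : AddCircle (1:ℝ)) = 1 := by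
    show AddCircle.liftIco 1 0 (g ρ) _ = 1
    rw [AddCircle.liftIco_coe_apply (by rw [zero_add]; constructor <;> norm_num)]
    rw [g, show ρ * (((1/2 : ℝ):ℂ) - 1/2) = 0 by push_cast; ring, Complex.cosh_zero]
  have hfour : ∀ n : ℤ, fourier n ((1/2 : ℝ) : AddCircle (1:ℝ)) = (-1:ℂ)^n := by
    intro n
    rw [fourier_coe_apply]
    rw [show 2*(Real.pi:ℂ)*Complex.I*(n:ℂ)*((1/2:ℝ):ℂ)/((1:ℝ):ℂ) = (n:ℂ)*((Real.pi:ℂ)*Complex.I) by push_cast; ring]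
    rw [Complex.exp_int_mul, Complex.exp_pi_mul_I]
  rw [hf] at hs
  simp_rw [coeff_eq ρ hρ, hfour, smul_eq_mul] at hs
  have h2 := hs.mul_left (1/(2*sh (ρ/2)))
  rw [mul_one] at h2
  have hshne := hsh ρ hρ
  have e : (fun n : ℤ => 1/(2*sh (ρ/2)) * (sh (ρ/2) * (2*ρ / (d ρ n * d ρ (-n))) * (-1:ℂ)^n))
      = fun n : ℤ => (-1:ℂ)^n * ρ / (d ρ n * d ρ (-n)) := by
    funext n
    have hA : d ρ n ≠ 0 := by
      intro h; exact hρ (-n) (by rw [d] at h; push_cast; linear_combination h)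
    have hB : d ρ (-n) ≠ 0 := by
      intro h; exact hρ n (by rw [d] at h; push_cast at h ⊢; linear_combination h)
    generalize sh (ρ/2) = s at hshne ⊢
    field_simp
  rwa [e] at h2

noncomputable def v (ρ : ℂ) (n : ℤ) : ℂ := (-1:ℂ)^n * ρ / (d ρ n * d ρ (-n))

lemma neg_one_zpow_neg (n : ℤ) : (-1:ℂ)^(-n) = (-1:ℂ)^n := by
  rw [zpow_neg, ← inv_zpow]; norm_num

lemma pair (A B X c : ℂ) (hA : A ≠ 0) (hB : B ≠ 0) :
    ((1-c)*X/A + (1-c)*X/B)/2 = (1-c) * (X * ((A+B)/2) / (A*B)) := by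
  field_simp; ring

lemma split (h : ℤ → ℂ) (hsymm : ∀ q, h (-q) = h q) (h0 : h 0 = 0) (N : ℕ) :
    ∑ q ∈ Finset.Icc (-(N:ℤ)) (N:ℤ), h q = 2 * ∑ i ∈ Finset.range N, h ((i:ℤ)+1) := by
  induction N with
  | zero => simpa using h0
  | succ n ih =>
    have e : Finset.Icc (-((n:ℤ)+1)) ((n:ℤ)+1)
        = insert (-((n:ℤ)+1)) (insert ((n:ℤ)+1) (Finset.Icc (-(n:ℤ)) (n:ℤ))) := by
      ext x; simp only [Finset.mem_Icc, Finset.mem_insert]; omega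
    rw [show ((n+1:ℕ):ℤ) = (n:ℤ)+1 by push_cast; ring, e, Finset.sum_insert (by
        simp only [Finset.mem_insert, Finset.mem_Icc]; omega),
      Finset.sum_insert (by simp only [Finset.mem_Icc]; omega), ih, Finset.sum_range_succ,
      hsymm ((n:ℤ)+1)]
    push_cast
    ring

lemma sum_Icc_v_tendsto (ρ : ℂ) (hρ : ∀ q : ℤ, ρ ≠ 2*Real.pi*Complex.I*q) :
    Tendsto (fun N : ℕ => ∑ q ∈ Finset.Icc (-(N:ℤ)) (N:ℤ), v ρ q) atTop
      (nhds (1/(2*sh (ρ/2)))) := by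
  have hmono : Monotone (fun N : ℕ => Finset.Icc (-(N:ℤ)) (N:ℤ)) := by
    intro a b hab
    apply Finset.Icc_subset_Icc <;> [skip; exact_mod_cast hab]
    simp only [neg_le_neg_iff]; exact_mod_cast hab
  have hcov : Tendsto (fun N : ℕ => Finset.Icc (-(N:ℤ)) (N:ℤ)) atTop atTop :=
    Filter.tendsto_atTop_finset_of_monotone hmono (fun x =>
      ⟨x.natAbs, by simp only [Finset.mem_Icc]; omega⟩)
  exact (hasSum_v ρ hρ).comp hcov

lemma u_tendsto (ρ : ℂ) (hρ : ∀ q : ℤ, ρ ≠ 2*Real.pi*Complex.I*q) :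
    Tendsto (fun i : ℕ => ((|(i:ℤ)+1| : ℤ) : ℂ) * v ρ ((i:ℤ)+1)) atTop (nhds 0) := by
  have hd : ∀ n : ℤ, d ρ n ≠ 0 := fun n h =>
    hρ (-n) (by rw [d] at h; push_cast; linear_combination h)
  obtain ⟨m, hm⟩ := exists_nat_ge (‖ρ‖/Real.pi)
  have hπ := Real.pi_pos
  have hρπ : ‖ρ‖ ≤ Real.pi * m := by
    rw [div_le_iff₀ hπ] at hm; linarith [hm]
  apply squeeze_zero_norm' (a := fun i : ℕ => (‖ρ‖/(Real.pi*Real.pi)) * (1/((i:ℝ)+1)))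
  · filter_upwards [Filter.eventually_ge_atTop m] with i hi
    have hi1 : (m:ℝ) ≤ (i:ℝ) := by exact_mod_cast hi
    have hcast : |((i:ℤ)+1 : ℤ)| = (i:ℤ)+1 := abs_of_pos (by omega)
    have hcastR : ((((i:ℤ)+1 : ℤ)):ℝ) = (i:ℝ)+1 := by push_cast; ring
    have hρi : ‖ρ‖ ≤ Real.pi * ((i:ℝ)+1) := by nlinarith
    have hA : Real.pi * ((i:ℝ)+1) ≤ ‖d ρ ((i:ℤ)+1)‖ := by
      have := norm_d_ge ρ ((i:ℤ)+1)
      rw [hcastR] at this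
      have habs : |(i:ℝ)+1| = (i:ℝ)+1 := abs_of_pos (by positivity)
      rw [habs] at this
      linarith
    have hB : Real.pi * ((i:ℝ)+1) ≤ ‖d ρ (-((i:ℤ)+1))‖ := by
      have := norm_d_ge ρ (-((i:ℤ)+1))
      rw [show ((-((i:ℤ)+1) : ℤ) : ℝ) = -((i:ℝ)+1) by push_cast; ring, abs_neg,
        abs_of_pos (by positivity : (0:ℝ) < (i:ℝ)+1)] at this
      linarith
    have hApos : (0:ℝ) < ‖d ρ ((i:ℤ)+1)‖ := lt_of_lt_of_le (by positivity) hA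
    have hBpos : (0:ℝ) < ‖d ρ (-((i:ℤ)+1))‖ := lt_of_lt_of_le (by positivity) hB
    have hnorm : ‖((|(i:ℤ)+1| : ℤ) : ℂ) * v ρ ((i:ℤ)+1)‖
        = ((i:ℝ)+1) * (‖ρ‖ / (‖d ρ ((i:ℤ)+1)‖ * ‖d ρ (-((i:ℤ)+1))‖)) := by
      rw [v, norm_mul, norm_div, norm_mul, norm_mul, norm_zpow, norm_neg, norm_one, one_zpow,
        one_mul, hcast]
      rw [show ‖(((i:ℤ)+1 : ℤ) : ℂ)‖ = (i:ℝ)+1 by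
        rw [show (((i:ℤ)+1 : ℤ) : ℂ) = (((i:ℝ)+1 : ℝ) : ℂ) by push_cast; ring,
          Complex.norm_real, Real.norm_eq_abs, abs_of_pos (by positivity)]]
    rw [hnorm]
    have key : ‖ρ‖ / (‖d ρ ((i:ℤ)+1)‖ * ‖d ρ (-((i:ℤ)+1))‖)
        ≤ ‖ρ‖ / ((Real.pi * ((i:ℝ)+1)) * (Real.pi * ((i:ℝ)+1))) := by
      gcongr <;> positivity
    calc ((i:ℝ)+1) * (‖ρ‖ / (‖d ρ ((i:ℤ)+1)‖ * ‖d ρ (-((i:ℤ)+1))‖))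
        ≤ ((i:ℝ)+1) * (‖ρ‖ / ((Real.pi * ((i:ℝ)+1)) * (Real.pi * ((i:ℝ)+1)))) := by
          have : (0:ℝ) ≤ (i:ℝ)+1 := by positivity
          exact mul_le_mul_of_nonneg_left key this
      _ = (‖ρ‖/(Real.pi*Real.pi)) * (1/((i:ℝ)+1)) := by
          field_simp
  · have h1 : Tendsto (fun i : ℕ => 1/((i:ℝ)+1)) atTop (nhds 0) :=
      tendsto_one_div_add_atTop_nhds_zero_nat
    have := h1.const_mul (‖ρ‖/(Real.pi*Real.pi))
    simpa using this

lemma v_neg (ρ : ℂ) (n : ℤ) : v ρ (-n) = v ρ n := by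
  rw [v, v, neg_one_zpow_neg, neg_neg, mul_comm (d ρ (-n))]

end Stmt16

theorem stmt16 (ρ : ℂ) (hρ : ∀ q : ℤ, ρ ≠ 2 * Real.pi * Complex.I * (q : ℂ)) :
    Filter.Tendsto
      (fun N : ℕ => ∑ q ∈ Finset.Icc (-(N : ℤ)) (N : ℤ),
        (1 - ((|q| : ℤ) : ℂ) / (N : ℂ)) * (-1 : ℂ) ^ q /
          (ρ + 2 * Real.pi * Complex.I * (q : ℂ)))
      Filter.atTop (nhds (1 / (2 * sh (ρ / 2)))) := by
  have hd : ∀ n : ℤ, Stmt16.d ρ n ≠ 0 := fun n h =>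
    hρ (-n) (by rw [Stmt16.d] at h; push_cast; linear_combination h)
  have hDm : ∀ q : ℤ, ρ + 2 * Real.pi * Complex.I * (q : ℂ) = Stmt16.d ρ q := fun q => rfl
  have hstep : ∀ N : ℕ,
      (∑ q ∈ Finset.Icc (-(N : ℤ)) (N : ℤ),
        (1 - ((|q| : ℤ) : ℂ) / (N : ℂ)) * (-1 : ℂ) ^ q /
          (ρ + 2 * Real.pi * Complex.I * (q : ℂ)))
      = (∑ q ∈ Finset.Icc (-(N : ℤ)) (N : ℤ), Stmt16.v ρ q)
        - (N:ℂ)⁻¹ * ∑ q ∈ Finset.Icc (-(N : ℤ)) (N : ℤ), ((|q| : ℤ) : ℂ) * Stmt16.v ρ q := by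
    intro N
    simp_rw [hDm]
    have hrefl : (∑ q ∈ Finset.Icc (-(N : ℤ)) (N : ℤ),
          (1 - ((|q| : ℤ) : ℂ) / (N : ℂ)) * (-1 : ℂ) ^ q / Stmt16.d ρ q)
        = ∑ q ∈ Finset.Icc (-(N : ℤ)) (N : ℤ),
          (1 - ((|(-q)| : ℤ) : ℂ) / (N : ℂ)) * (-1 : ℂ) ^ (-q) / Stmt16.d ρ (-q) := by
      refine Finset.sum_equiv (Equiv.neg ℤ) (fun i => ?_) (fun i _ => ?_)
      · simp only [Finset.mem_Icc, Equiv.neg_apply]; omega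
      · simp only [Equiv.neg_apply, neg_neg]
    have h2 : (∑ q ∈ Finset.Icc (-(N : ℤ)) (N : ℤ),
          (1 - ((|q| : ℤ) : ℂ) / (N : ℂ)) * (-1 : ℂ) ^ q / Stmt16.d ρ q)
        = ∑ q ∈ Finset.Icc (-(N : ℤ)) (N : ℤ),
          ((1 - ((|q| : ℤ) : ℂ) / (N : ℂ)) * (-1 : ℂ) ^ q / Stmt16.d ρ q
            + (1 - ((|(-q)| : ℤ) : ℂ) / (N : ℂ)) * (-1 : ℂ) ^ (-q) / Stmt16.d ρ (-q)) / 2 := by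
      rw [← Finset.sum_div, Finset.sum_add_distrib, ← hrefl]
      ring
    rw [h2]
    have h3 : ∀ q ∈ Finset.Icc (-(N : ℤ)) (N : ℤ),
        ((1 - ((|q| : ℤ) : ℂ) / (N : ℂ)) * (-1 : ℂ) ^ q / Stmt16.d ρ q
            + (1 - ((|(-q)| : ℤ) : ℂ) / (N : ℂ)) * (-1 : ℂ) ^ (-q) / Stmt16.d ρ (-q)) / 2
          = Stmt16.v ρ q - (N:ℂ)⁻¹ * (((|q| : ℤ) : ℂ) * Stmt16.v ρ q) := by
      intro q _
      have e1 := Stmt16.pair (Stmt16.d ρ q) (Stmt16.d ρ (-q)) ((-1:ℂ)^q)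
        (((|q| : ℤ) : ℂ)/(N:ℂ)) (hd q) (hd (-q))
      have hAB : (Stmt16.d ρ q + Stmt16.d ρ (-q))/2 = ρ := by
        rw [Stmt16.d, Stmt16.d]; push_cast; ring
      rw [hAB] at e1
      rw [abs_neg, Stmt16.neg_one_zpow_neg, e1, Stmt16.v]
      ring
    rw [Finset.sum_congr rfl h3, Finset.sum_sub_distrib, ← Finset.mul_sum]
  have hsplit : ∀ N : ℕ, (∑ q ∈ Finset.Icc (-(N : ℤ)) (N : ℤ), ((|q| : ℤ) : ℂ) * Stmt16.v ρ q)
      = 2 * ∑ i ∈ Finset.range N, ((|(i:ℤ)+1| : ℤ) : ℂ) * Stmt16.v ρ ((i:ℤ)+1) := by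
    intro N
    refine Stmt16.split (fun q => ((|q| : ℤ) : ℂ) * Stmt16.v ρ q) (fun q => ?_) (by simp) N
    show ((|(-q)| : ℤ) : ℂ) * Stmt16.v ρ (-q) = ((|q| : ℤ) : ℂ) * Stmt16.v ρ q
    rw [abs_neg, Stmt16.v_neg]
  have hO : Tendsto (fun N : ℕ => (N:ℂ)⁻¹ *
      ∑ q ∈ Finset.Icc (-(N : ℤ)) (N : ℤ), ((|q| : ℤ) : ℂ) * Stmt16.v ρ q) atTop (nhds 0) := by
    have hc := (Stmt16.u_tendsto ρ hρ).cesaro_smul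
    have e : (fun N : ℕ => (N:ℂ)⁻¹ *
        ∑ q ∈ Finset.Icc (-(N : ℤ)) (N : ℤ), ((|q| : ℤ) : ℂ) * Stmt16.v ρ q)
        = fun N : ℕ => 2 * (((N:ℝ)⁻¹ : ℝ) •
          ∑ i ∈ Finset.range N, ((|(i:ℤ)+1| : ℤ) : ℂ) * Stmt16.v ρ ((i:ℤ)+1)) := by
      funext N
      rw [hsplit N, Complex.real_smul]
      push_cast
      ring
    rw [e]
    simpa using hc.const_mul (2:ℂ)
  have final := (Stmt16.sum_Icc_v_tendsto ρ hρ).sub hO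
  rw [sub_zero] at final
  exact Filter.Tendsto.congr (fun N => (hstep N).symm) final
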